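/- arXiv:2311.11253 — 3 statements merged into one kernel-verified Lean document; each statement's English description precedes it below -/
import Mathlib

section
/- Let n be a natural number, let x_0 < x_1 < ⋯ < x_n be distinct points in [a,b], and let f : ℝ → ℝ be (n+1)-times differentiable on [a,b]. If I_n is the unique polynomial of degree at most n with I_n(x_k) = f(x_k) for all k, then for every x ∈ [a,b] there exists ξ ∈ (a,b) such that f(x) − I_n(x) = f^{(n+1)}(ξ)/(n+1)! · ∏_{k=0}^{n} (x − x_k). -/
open Set Polynomial

/-- Rolle within `Icc a b`. -/
lemma rolle_within (a b : ℝ) (g : ℝ → ℝ) (hg : DifferentiableOn ℝ g (Icc a b))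
    (y0 y1 : ℝ) (h01 : y0 < y1) (hy0 : y0 ∈ Icc a b) (hy1 : y1 ∈ Icc a b)
    (h0 : g y0 = 0) (h1 : g y1 = 0) :
    ∃ z ∈ Ioo y0 y1, derivWithin g (Icc a b) z = 0 := by
  obtain ⟨z, hz, hz'⟩ := exists_deriv_eq_zero h01
    (hg.continuousOn.mono (Icc_subset_Icc hy0.1 hy1.2)) (h0.trans h1.symm)
  refine ⟨z, hz, ?_⟩
  rw [derivWithin_of_mem_nhds
    (Icc_mem_nhds (lt_of_le_of_lt hy0.1 hz.1) (lt_of_lt_of_le hz.2 hy1.2))]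
  exact hz'

/-- Iterated Rolle on `Icc a b`. -/
lemma rolle_iter (a b : ℝ) (hab : a < b) :
    ∀ (m : ℕ) (g : ℝ → ℝ),
      (∀ i < m + 1, DifferentiableOn ℝ (iteratedDerivWithin i g (Icc a b)) (Icc a b)) →
      ∀ (y : Fin (m + 2) → ℝ), StrictMono y → (∀ j, y j ∈ Icc a b) →
      (∀ j, g (y j) = 0) →
      ∃ ξ ∈ Ioo a b, iteratedDerivWithin (m + 1) g (Icc a b) ξ = 0 := by
  intro m
  induction m with
  | zero =>
    intro g hg y hy hyab hzero
    have hg0 : DifferentiableOn ℝ g (Icc a b) := by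
      simpa [iteratedDerivWithin_zero] using hg 0 (by norm_num)
    obtain ⟨z, hz, hz'⟩ := rolle_within a b g hg0 (y 0) (y 1)
      (hy (by norm_num)) (hyab 0) (hyab 1) (hzero 0) (hzero 1)
    have hzab : z ∈ Ioo a b :=
      ⟨lt_of_le_of_lt (hyab 0).1 hz.1, lt_of_lt_of_le hz.2 (hyab 1).2⟩
    refine ⟨z, hzab, ?_⟩
    rw [iteratedDerivWithin_one]
    exact hz'
  | succ m IH =>
    intro g hg y hy hyab hzero
    have hg0 : DifferentiableOn ℝ g (Icc a b) := by
      simpa [iteratedDerivWithin_zero] using hg 0 (by norm_num)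
    have key : ∀ j : Fin (m + 2), ∃ z ∈ Ioo (y j.castSucc) (y j.succ),
        derivWithin g (Icc a b) z = 0 := fun j =>
      rolle_within a b g hg0 _ _ (hy (Fin.castSucc_lt_succ : j.castSucc < j.succ)) (hyab _) (hyab _)
        (hzero _) (hzero _)
    choose z hz hz0 using key
    have hzmem : ∀ j, z j ∈ Icc a b := fun j =>
      ⟨le_of_lt (lt_of_le_of_lt (hyab _).1 (hz j).1),
       le_of_lt (lt_of_lt_of_le (hz j).2 (hyab _).2)⟩
    have hzmono : StrictMono z := by
      intro i j hij
      have h1 : y i.succ ≤ y j.castSucc := hy.monotone (by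
        simp [Fin.le_def]
        omega)
      exact lt_trans (lt_of_lt_of_le (hz i).2 h1) (hz j).1
    have hdiff : ∀ i < m + 1,
        DifferentiableOn ℝ (iteratedDerivWithin i (derivWithin g (Icc a b)) (Icc a b))
          (Icc a b) := by
      intro i hi
      refine (hg (i + 1) (by omega)).congr ?_
      intro w hw
      exact (congrFun iteratedDerivWithin_succ' w).symm
    obtain ⟨ξ, hξ, hξ0⟩ := IH (derivWithin g (Icc a b)) hdiff z hzmono hzmem hz0
    refine ⟨ξ, hξ, ?_⟩
    rw [iteratedDerivWithin_succ']
    exact hξ0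

lemma iterate_derivative_add' (k : ℕ) (p q : Polynomial ℝ) :
    Polynomial.derivative^[k] (p + q) =
      Polynomial.derivative^[k] p + Polynomial.derivative^[k] q := by
  induction k generalizing p q with
  | zero => simp
  | succ k ih => simp [Function.iterate_succ_apply, derivative_add, ih]

/-- Lagrange interpolation error formula: if `x_0 < ⋯ < x_n` lie in `[a,b]`,
`f` is `(n+1)`-times differentiable on `[a,b]`, and `I_n` is the polynomial of degree at
most `n` interpolating `f` at the `x_k`, then for every `x ∈ [a,b]` there is `ξ ∈ (a,b)`
with `f(x) − I_n(x) = f^{(n+1)}(ξ)/(n+1)! · ∏_{k=0}^{n} (x − x_k)`. -/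
theorem lagrange_interpolation_error (n : ℕ) (a b : ℝ) (hab : a < b)
    (x : Fin (n + 1) → ℝ) (hx : StrictMono x) (hxab : ∀ k, x k ∈ Set.Icc a b)
    (f : ℝ → ℝ)
    (hf : ∀ i < n + 1,
      DifferentiableOn ℝ (iteratedDerivWithin i f (Set.Icc a b)) (Set.Icc a b))
    (I : Polynomial ℝ) (hIdeg : I.degree ≤ n) (hI : ∀ k, I.eval (x k) = f (x k)) :
    ∀ t ∈ Set.Icc a b, ∃ ξ ∈ Set.Ioo a b,
      f t - I.eval t =
        iteratedDerivWithin (n + 1) f (Set.Icc a b) ξ / (Nat.factorial (n + 1)) *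
          ∏ k : Fin (n + 1), (t - x k) := by
  intro t ht
  by_cases htx : ∃ k, t = x k
  · obtain ⟨k, rfl⟩ := htx
    refine ⟨(a + b) / 2, ⟨by linarith, by linarith⟩, ?_⟩
    rw [hI k, sub_self, Finset.prod_eq_zero (Finset.mem_univ k) (sub_self (x k)), mul_zero]
  · push_neg at htx
    set S := Icc a b with hS
    have US : UniqueDiffOn ℝ S := uniqueDiffOn_Icc hab
    set w : Polynomial ℝ := ∏ k : Fin (n + 1), (X - C (x k)) with hw
    have hwt : w.eval t = ∏ k : Fin (n + 1), (t - x k) := by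
      simp [hw, eval_prod]
    have hwt0 : w.eval t ≠ 0 := by
      rw [hwt]
      exact Finset.prod_ne_zero_iff.mpr fun k _ => sub_ne_zero.mpr (htx k)
    set c : ℝ := (f t - I.eval t) / w.eval t with hc
    set p : Polynomial ℝ := I + C c * w with hp
    set g : ℝ → ℝ := fun y => f y - p.eval y with hg
    -- zeros of g
    have hgx : ∀ k, g (x k) = 0 := by
      intro k
      have : w.eval (x k) = 0 := by
        rw [hw, eval_prod]
        exact Finset.prod_eq_zero (Finset.mem_univ k) (by simp)
      simp [hg, hp, this, hI k]
    have hgt : g t = 0 := by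
      simp only [hg, hp, eval_add, eval_mul, eval_C]
      rw [hc, div_mul_cancel₀ _ hwt0]
      ring
    -- iterated derivatives of g
    have claim : ∀ i ≤ n + 1, ∀ z ∈ S,
        iteratedDerivWithin i g S z =
          iteratedDerivWithin i f S z - (Polynomial.derivative^[i] p).eval z := by
      intro i
      induction i with
      | zero => intro _ z hz; simp [hg, iteratedDerivWithin_zero]
      | succ i ih =>
        intro hi z hz
        have hi' : i ≤ n + 1 := by omega
        have hfi : DifferentiableOn ℝ (iteratedDerivWithin i f S) S := hf i (by omega)
        rw [iteratedDerivWithin_succ, iteratedDerivWithin_succ]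
        have hcongr : derivWithin (iteratedDerivWithin i g S) S z =
            derivWithin (fun y => iteratedDerivWithin i f S y
              - (Polynomial.derivative^[i] p).eval y) S z :=
          derivWithin_congr (fun y hy => ih hi' y hy) (ih hi' z hz)
        rw [hcongr, derivWithin_fun_sub (hfi z hz)
          ((Polynomial.differentiable _).differentiableAt.differentiableWithinAt)]
        have : derivWithin (fun y => (Polynomial.derivative^[i] p).eval y) S z
            = (Polynomial.derivative^[i + 1] p).eval z := by
          rw [DifferentiableAt.derivWithin (Polynomial.differentiable _).differentiableAt
            (US z hz), Polynomial.deriv, Function.iterate_succ_apply']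
        rw [this]
    have hgdiff : ∀ i < n + 1, DifferentiableOn ℝ (iteratedDerivWithin i g S) S := by
      intro i hi
      exact ((hf i hi).sub ((Polynomial.differentiable
        (Polynomial.derivative^[i] p)).differentiableOn)).congr
        (fun z hz => claim i (by omega) z hz)
    -- the n+2 points
    set F : Finset ℝ := insert t (Finset.image x Finset.univ) with hF
    have htF : t ∉ Finset.image x Finset.univ := by
      simp only [Finset.mem_image, Finset.mem_univ, true_and, not_exists]
      exact fun k h => htx k h.symm
    have hcard : F.card = n + 2 := by
      rw [hF, Finset.card_insert_of_notMem htF,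
        Finset.card_image_of_injective _ hx.injective, Finset.card_univ, Fintype.card_fin]
    let e := F.orderIsoOfFin hcard
    have hFmem : ∀ u ∈ F, u ∈ S ∧ g u = 0 := by
      intro u hu
      rw [hF, Finset.mem_insert] at hu
      rcases hu with rfl | hu
      · exact ⟨ht, hgt⟩
      · obtain ⟨k, _, rfl⟩ := Finset.mem_image.mp hu
        exact ⟨hxab k, hgx k⟩
    obtain ⟨ξ, hξ, hξ0⟩ := rolle_iter a b hab n g hgdiff (fun j => (e j : ℝ))
      (fun i j hij => e.strictMono hij)
      (fun j => (hFmem _ (e j).2).1) (fun j => (hFmem _ (e j).2).2)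
    refine ⟨ξ, hξ, ?_⟩
    have hval := claim (n + 1) le_rfl ξ (Ioo_subset_Icc_self hξ)
    rw [hξ0] at hval
    -- compute derivative^[n+1] p
    have hIz : Polynomial.derivative^[n + 1] I = 0 :=
      iterate_derivative_eq_zero (lt_of_le_of_lt (natDegree_le_iff_degree_le.mpr hIdeg)
        (Nat.lt_succ_self n))
    have hwmonic : w.Monic := monic_prod_of_monic _ _ fun k _ => monic_X_sub_C (x k)
    have hwdeg : w.natDegree = n + 1 := by
      rw [hw, natDegree_prod _ _ fun k _ => X_sub_C_ne_zero (x k)]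
      simp [natDegree_X_sub_C]
    have hwdeg' : w.degree = (n + 1 : ℕ) := by
      rw [degree_eq_natDegree hwmonic.ne_zero, hwdeg]
    have hsub : Polynomial.derivative^[n + 1] (w - X ^ (n + 1)) = 0 := by
      rcases eq_or_ne (w - X ^ (n + 1)) 0 with h | h
      · rw [h, iterate_derivative_zero]
      · refine iterate_derivative_eq_zero ?_
        have hdlt : (w - X ^ (n + 1)).degree < w.degree :=
          degree_sub_lt (by rw [hwdeg', degree_X_pow]) hwmonic.ne_zero
            (by rw [hwmonic.leadingCoeff, monic_X_pow])
        exact (natDegree_lt_iff_degree_lt h).mpr (hdlt.trans_le (le_of_eq hwdeg'))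
    have hwder : Polynomial.derivative^[n + 1] w = C (((n + 1).factorial : ℕ) : ℝ) := by
      have heq : w = (w - X ^ (n + 1)) + X ^ (n + 1) := (sub_add_cancel _ _).symm
      rw [heq, iterate_derivative_add', hsub, zero_add,
        iterate_derivative_X_pow_eq_C_mul]
      rw [← Nat.descFactorial_self (n + 1), Nat.descFactorial_succ, Nat.add_sub_cancel_left, one_mul]
      simp
    have hpder : (Polynomial.derivative^[n + 1] p).eval ξ = c * (n + 1).factorial := by
      rw [hp, iterate_derivative_add', iterate_derivative_C_mul, hIz, hwder]
      simp
    rw [hpder] at hval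
    have hfval : iteratedDerivWithin (n + 1) f S ξ = c * (n + 1).factorial := by linarith
    rw [hfval, ← hwt]
    field_simp [hc]
    rw [hc, div_mul_cancel₀ _ hwt0]
end

section
/- Let n be a natural number and let f : ℝ → ℝ be (n+1)-times differentiable on [-1,1] with |f^{(n+1)}(x)| ≤ M_{n+1} for all x ∈ [-1,1]. If I_n is the polynomial of degree at most n interpolating f at the Chebyshev nodes x_k = cos((2k+1)π/(2n+2)), k = 0,…,n, then sup_{x ∈ [-1,1]} |f(x) − I_n(x)| ≤ M_{n+1} / (2^n (n+1)!). -/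
open Real Polynomial

section ChebAux
open Real Polynomial Set


lemma chebT_natDegree_le : ∀ m : ℕ, (Polynomial.Chebyshev.T ℝ (m : ℤ)).natDegree ≤ m := by
  intro m
  induction m using Nat.strong_induction_on with
  | _ m ih =>
    match m with
    | 0 => simp
    | 1 => simpa using natDegree_X_le
    | (k+2) =>
      have h1 := ih (k+1) (by omega)
      have h0 := ih k (by omega)
      rw [show ((k+2:ℕ):ℤ) = (k:ℤ)+2 by push_cast; ring, Polynomial.Chebyshev.T_add_two]
      refine (natDegree_sub_le _ _).trans (max_le ?_ ?_)
      · refine (natDegree_mul_le).trans ?_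
        have : (2 * X : ℝ[X]).natDegree ≤ 1 := natDegree_mul_le.trans (by simpa using natDegree_X_le)
        have h1' : (Polynomial.Chebyshev.T ℝ ((k:ℤ)+1)).natDegree ≤ k + 1 := by
          rw [show (k:ℤ)+1 = ((k+1:ℕ):ℤ) by push_cast; ring]; exact h1
        omega
      · omega

lemma chebT_coeff : ∀ m : ℕ, (Polynomial.Chebyshev.T ℝ ((m : ℤ) + 1)).coeff (m+1) = 2 ^ m := by
  intro m
  induction m using Nat.strong_induction_on with
  | _ m ih =>
    match m with
    | 0 => simp
    | (k+1) =>
      have h1 := ih k (by omega)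
      rw [show (((k+1:ℕ)):ℤ)+1 = (k:ℤ)+2 by push_cast; ring, Polynomial.Chebyshev.T_add_two]
      have h0 : (Polynomial.Chebyshev.T ℝ (k:ℤ)).coeff (k+2) = 0 := by
        apply coeff_eq_zero_of_natDegree_lt
        exact lt_of_le_of_lt (chebT_natDegree_le k) (by omega)
      rw [coeff_sub, h0, sub_zero, mul_assoc, show ((2:ℝ[X]) = C 2) from (map_ofNat C 2).symm, coeff_C_mul,
        coeff_X_mul, h1]
      ring


noncomputable def chebNode (n k : ℕ) : ℝ :=
  Real.cos ((2 * (k:ℝ) + 1) * Real.pi / (2 * (n:ℝ) + 2))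

lemma chebAngle_mem (n k : ℕ) (hk : k ≤ n) :
    (2 * (k:ℝ) + 1) * Real.pi / (2 * (n:ℝ) + 2) ∈ Set.Ioo 0 Real.pi := by
  have hπ := Real.pi_pos
  have hden : (0:ℝ) < 2 * (n:ℝ) + 2 := by positivity
  constructor
  · positivity
  · rw [div_lt_iff₀ hden]
    have : (2 * (k:ℝ) + 1) < 2 * (n:ℝ) + 2 := by
      have : (k:ℝ) ≤ n := Nat.cast_le.mpr hk
      linarith
    nlinarith

lemma chebNode_injective (n : ℕ) :
    Function.Injective (fun k : Fin (n+1) => chebNode n k) := by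
  intro i j hij
  have hi := chebAngle_mem n i (Nat.lt_succ_iff.mp i.isLt)
  have hj := chebAngle_mem n j (Nat.lt_succ_iff.mp j.isLt)
  have := Real.strictAntiOn_cos.injOn
    (Set.mem_Icc.mpr ⟨le_of_lt hi.1, le_of_lt hi.2⟩)
    (Set.mem_Icc.mpr ⟨le_of_lt hj.1, le_of_lt hj.2⟩) hij
  have hπ := Real.pi_ne_zero
  have hden : (2 * (n:ℝ) + 2) ≠ 0 := by positivity
  field_simp at this
  exact Fin.ext (by exact_mod_cast (show ((i:ℕ):ℝ) = ((j:ℕ):ℝ) by linarith))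

lemma chebT_eval_node (n k : ℕ) :
    (Polynomial.Chebyshev.T ℝ ((n:ℤ)+1)).eval (chebNode n k) = 0 := by
  have hden : (2 * (n:ℝ) + 2) ≠ 0 := by positivity
  rw [chebNode, Polynomial.Chebyshev.T_real_cos]
  have : (((n:ℤ)+1 : ℤ) : ℝ) * ((2 * (k:ℝ) + 1) * Real.pi / (2 * (n:ℝ) + 2))
      = (k:ℝ) * Real.pi + Real.pi / 2 := by
    push_cast
    field_simp
  rw [this, Real.cos_add, Real.cos_pi_div_two, Real.sin_pi_div_two, Real.sin_nat_mul_pi]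
  ring

lemma cheb_eq_prod (n : ℕ) :
    Polynomial.Chebyshev.T ℝ ((n:ℤ)+1) =
      C ((2:ℝ)^n) * ∏ k : Fin (n+1), (X - C (chebNode n k)) := by
  set P := ∏ k : Fin (n+1), (X - C (chebNode n (k:ℕ))) with hP
  have hPm : P.Monic := monic_prod_of_monic _ _ (fun k _ => monic_X_sub_C _)
  have hPdeg : P.natDegree = n + 1 := by
    rw [hP, natDegree_prod _ _ (fun k _ => X_sub_C_ne_zero _)]
    simp
  have hTdeg : (Polynomial.Chebyshev.T ℝ ((n:ℤ)+1)).natDegree ≤ n + 1 := by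
    have := chebT_natDegree_le (n+1)
    rwa [show ((n+1:ℕ):ℤ) = (n:ℤ)+1 by push_cast; ring] at this
  set q := Polynomial.Chebyshev.T ℝ ((n:ℤ)+1) - C ((2:ℝ)^n) * P with hq
  have hqdeg : q.natDegree ≤ n := by
    rw [natDegree_le_iff_coeff_eq_zero]
    intro N hN
    rw [hq, coeff_sub, coeff_C_mul]
    rcases eq_or_lt_of_le (Nat.succ_le_of_lt hN) with h | h
    · have hN1 : N = n + 1 := by omega
      rw [hN1, chebT_coeff n, ← hPdeg, hPm.coeff_natDegree]
      ring
    · rw [coeff_eq_zero_of_natDegree_lt (lt_of_le_of_lt hTdeg h),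
        coeff_eq_zero_of_natDegree_lt (by rw [hPdeg]; exact h)]
      ring
  have hq0 : q = 0 := by
    apply q.eq_zero_of_natDegree_lt_card_of_eval_eq_zero (chebNode_injective n)
    · intro i
      rw [hq, eval_sub, eval_mul, chebT_eval_node]
      have : P.eval (chebNode n i) = 0 := by
        rw [hP, eval_prod]
        exact Finset.prod_eq_zero (Finset.mem_univ i) (by simp)
      rw [this]
      ring
    · simpa using Nat.lt_succ_of_le hqdeg
  have := sub_eq_zero.mp hq0
  exact this

lemma cheb_prod_bound (n : ℕ) (t : ℝ) (ht : t ∈ Set.Icc (-1:ℝ) 1) :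
    |(∏ k : Fin (n+1), (X - C (chebNode n (k:ℕ)))).eval t| ≤ 1 / 2 ^ n := by
  have h := congrArg (fun p => Polynomial.eval t p) (cheb_eq_prod n)
  simp only [eval_mul, eval_C] at h
  have hT : |(Polynomial.Chebyshev.T ℝ ((n:ℤ)+1)).eval t| ≤ 1 := by
    rw [show t = Real.cos (Real.arccos t) from (Real.cos_arccos ht.1 ht.2).symm,
      Polynomial.Chebyshev.T_real_cos]
    exact Real.abs_cos_le_one _
  rw [h, abs_mul, abs_of_pos (by positivity : (0:ℝ) < (2:ℝ)^n)] at hT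
  rw [le_div_iff₀ (by positivity : (0:ℝ) < (2:ℝ)^n)]
  linarith


lemma iterated_rolle : ∀ (m : ℕ) (g : ℝ → ℝ) (p : Fin (m + 2) → ℝ),
    StrictMono p → (∀ i, p i ∈ Set.Icc (-1:ℝ) 1) → (∀ i, g (p i) = 0) →
    (∀ i ≤ m, DifferentiableOn ℝ (iteratedDerivWithin i g (Set.Icc (-1:ℝ) 1)) (Set.Icc (-1:ℝ) 1)) →
    ∃ ξ ∈ Set.Ioo (p 0) (p (Fin.last (m+1))),
      iteratedDerivWithin (m+1) g (Set.Icc (-1:ℝ) 1) ξ = 0 := by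
  have hud : UniqueDiffOn ℝ (Set.Icc (-1:ℝ) 1) := uniqueDiffOn_Icc (by norm_num)
  intro m
  induction m with
  | zero =>
    intro g p hp hmem hz hd
    have hlt : p 0 < p 1 := hp (by norm_num)
    have hcont : ContinuousOn g (Icc (p 0) (p 1)) := by
      refine ((hd 0 le_rfl).continuousOn.congr ?_).mono
        (Icc_subset_Icc (hmem 0).1 (hmem 1).2)
      intro x hx; rw [iteratedDerivWithin_zero]
    obtain ⟨c, hc, hc0⟩ := exists_deriv_eq_zero hlt hcont ((hz 0).trans (hz 1).symm)
    refine ⟨c, by simpa [Fin.last] using hc, ?_⟩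
    have hcI : Icc (-1:ℝ) 1 ∈ nhds c :=
      Icc_mem_nhds (lt_of_le_of_lt (hmem 0).1 hc.1) (lt_of_lt_of_le hc.2 (hmem 1).2)
    rw [iteratedDerivWithin_one,
      derivWithin_of_mem_nhds hcI, hc0]
  | succ m IH =>
    intro g p hp hmem hz hd
    have hcont : ContinuousOn g (Icc (-1:ℝ) 1) := by
      refine (hd 0 (by omega)).continuousOn.congr ?_
      intro x hx; rw [iteratedDerivWithin_zero]
    have H : ∀ i : Fin (m+2), ∃ c ∈ Ioo (p i.castSucc) (p i.succ), deriv g c = 0 := by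
      intro i
      have hlt : p i.castSucc < p i.succ := hp Fin.castSucc_lt_succ
      exact exists_deriv_eq_zero hlt
        (hcont.mono (Icc_subset_Icc (hmem _).1 (hmem _).2))
        ((hz _).trans (hz _).symm)
    choose q hq hq0 using H
    have hqIoo : ∀ i, q i ∈ Ioo (-1:ℝ) 1 := fun i =>
      ⟨lt_of_le_of_lt (hmem i.castSucc).1 (hq i).1, lt_of_lt_of_le (hq i).2 (hmem i.succ).2⟩
    have hqmono : StrictMono q := by
      intro i j hij
      calc q i < p i.succ := (hq i).2
        _ ≤ p j.castSucc := hp.monotone (by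
            have : (i : ℕ) < (j : ℕ) := hij
            rw [Fin.le_def, Fin.val_succ, Fin.coe_castSucc]; omega)
        _ < q j := (hq j).1
    have hqz : ∀ i, derivWithin g (Icc (-1:ℝ) 1) (q i) = 0 := by
      intro i
      rw [derivWithin_of_mem_nhds (Icc_mem_nhds (hqIoo i).1 (hqIoo i).2)]
      exact hq0 i
    have hd' : ∀ i ≤ m, DifferentiableOn ℝ
        (iteratedDerivWithin i (derivWithin g (Icc (-1:ℝ) 1)) (Icc (-1:ℝ) 1)) (Icc (-1:ℝ) 1) := by
      intro i hi
      refine (hd (i+1) (by omega)).congr ?_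
      intro x hx
      exact (congrFun iteratedDerivWithin_succ' x).symm
    obtain ⟨ξ, hξ, hξ0⟩ := IH (derivWithin g (Icc (-1:ℝ) 1)) q hqmono
      (fun i => Ioo_subset_Icc_self (hqIoo i)) hqz hd'
    refine ⟨ξ, ?_, ?_⟩
    · constructor
      · calc p 0 = p (Fin.castSucc 0) := by norm_num
          _ < q 0 := (hq 0).1
          _ < ξ := hξ.1
      · calc ξ < q (Fin.last (m+1)) := hξ.2
          _ < p (Fin.last (m+1)).succ := (hq _).2
          _ = p (Fin.last (m+2)) := by rw [Fin.succ_last]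
    · have hξs : ξ ∈ Icc (-1:ℝ) 1 :=
        Ioo_subset_Icc_self ⟨lt_trans (hqIoo 0).1 hξ.1, lt_trans hξ.2 (hqIoo _).2⟩
      rw [iteratedDerivWithin_succ']
      exact hξ0

open Set Polynomial

lemma iter_deriv_sub_poly (n : ℕ) (f : ℝ → ℝ)
    (hf : ∀ i < n + 1,
      DifferentiableOn ℝ (iteratedDerivWithin i f (Icc (-1:ℝ) 1)) (Icc (-1:ℝ) 1))
    (Q : ℝ[X]) : ∀ m ≤ n+1, ∀ x ∈ Icc (-1:ℝ) 1,
      iteratedDerivWithin m (fun y => f y - Q.eval y) (Icc (-1:ℝ) 1) x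
        = iteratedDerivWithin m f (Icc (-1:ℝ) 1) x - (derivative^[m] Q).eval x := by
  have hud : UniqueDiffOn ℝ (Set.Icc (-1:ℝ) 1) := uniqueDiffOn_Icc (by norm_num)
  intro m
  induction m with
  | zero => intro _ x hx; simp
  | succ m IH =>
    intro hm x hx
    rw [iteratedDerivWithin_succ, iteratedDerivWithin_succ]
    rw [derivWithin_congr (fun y hy => IH (by omega) y hy) (IH (by omega) x hx)]
    rw [derivWithin_fun_sub ((hf m (by omega)) x hx)
      ((Polynomial.differentiable _).differentiableAt.differentiableWithinAt)]
    congr 1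
    rw [(Polynomial.differentiable _ |>.differentiableAt).derivWithin (hud x hx)]
    rw [Polynomial.deriv, ← Function.iterate_succ_apply' derivative m Q]

end ChebAux

/-- Chebyshev interpolation error bound: if `f` is `(n+1)`-times differentiable on `[-1,1]`
with `|f^{(n+1)}| ≤ M` there, and `I_n` is the polynomial of degree at most `n`
interpolating `f` at the Chebyshev nodes `x_k = cos((2k+1)π/(2n+2))`, then
`sup_{x ∈ [-1,1]} |f(x) − I_n(x)| ≤ M / (2^n (n+1)!)`. -/
theorem chebyshev_interpolation_error_bound (n : ℕ) (f : ℝ → ℝ) (M : ℝ)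
    (hf : ∀ i < n + 1,
      DifferentiableOn ℝ (iteratedDerivWithin i f (Set.Icc (-1 : ℝ) 1)) (Set.Icc (-1 : ℝ) 1))
    (hM : ∀ t ∈ Set.Icc (-1 : ℝ) 1,
      |iteratedDerivWithin (n + 1) f (Set.Icc (-1 : ℝ) 1) t| ≤ M)
    (I : Polynomial ℝ) (hIdeg : I.degree ≤ n)
    (hI : ∀ k : ℕ, k ≤ n →
      I.eval (Real.cos ((2 * k + 1) * Real.pi / (2 * n + 2))) =
        f (Real.cos ((2 * k + 1) * Real.pi / (2 * n + 2)))) :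
    ∀ t ∈ Set.Icc (-1 : ℝ) 1,
      |f t - I.eval t| ≤ M / (2 ^ n * Nat.factorial (n + 1)) := by
  intro t ht
  have hM0 : 0 ≤ M := le_trans (abs_nonneg _) (hM t ht)
  have hfac : (0:ℝ) < (Nat.factorial (n+1) : ℝ) := by positivity
  have hpow : (0:ℝ) < (2:ℝ) ^ n := by positivity
  set P : ℝ[X] := ∏ k : Fin (n+1), (X - C (chebNode n (k:ℕ))) with hP
  have hPm : P.Monic := monic_prod_of_monic _ _ (fun k _ => monic_X_sub_C _)
  have hPdeg : P.natDegree = n + 1 := by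
    rw [hP, natDegree_prod _ _ (fun k _ => X_sub_C_ne_zero _)]; simp
  have hInterp : ∀ k : Fin (n+1), I.eval (chebNode n (k:ℕ)) = f (chebNode n (k:ℕ)) :=
    fun k => hI k (Nat.lt_succ_iff.mp k.isLt)
  by_cases hnode : ∃ k : Fin (n+1), chebNode n (k:ℕ) = t
  · obtain ⟨k, hk⟩ := hnode
    rw [← hk, hInterp k, sub_self, abs_zero]
    positivity
  · push_neg at hnode
    have hPt : P.eval t ≠ 0 := by
      rw [hP, eval_prod]
      refine Finset.prod_ne_zero_iff.mpr (fun k _ => ?_)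
      simp only [eval_sub, eval_X, eval_C, sub_ne_zero]
      exact fun h => hnode k h.symm
    set c : ℝ := (f t - I.eval t) / P.eval t with hc
    set Q : ℝ[X] := I + C c * P with hQ
    have hft : f t - I.eval t = c * P.eval t := by
      rw [hc]; field_simp
    set g : ℝ → ℝ := fun y => f y - Q.eval y with hg
    set F : Finset ℝ :=
      insert t (Finset.image (fun k : Fin (n+1) => chebNode n (k:ℕ)) Finset.univ) with hF
    have htF : t ∉ Finset.image (fun k : Fin (n+1) => chebNode n (k:ℕ)) Finset.univ := by
      simp only [Finset.mem_image, Finset.mem_univ, true_and, not_exists]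
      exact hnode
    have hcard : F.card = n + 2 := by
      rw [hF, Finset.card_insert_of_notMem htF,
        Finset.card_image_of_injective _ (chebNode_injective n), Finset.card_univ,
        Fintype.card_fin]
    have hFmem : ∀ x ∈ F, x ∈ Set.Icc (-1:ℝ) 1 := by
      intro x hx
      rcases Finset.mem_insert.mp hx with rfl | hx
      · exact ht
      · obtain ⟨k, _, rfl⟩ := Finset.mem_image.mp hx
        exact Real.cos_mem_Icc _
    have hgF : ∀ x ∈ F, g x = 0 := by
      intro x hx
      rcases Finset.mem_insert.mp hx with rfl | hx
      · simp only [hg, hQ, eval_add, eval_mul, eval_C]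
        rw [← hft]; ring
      · obtain ⟨k, _, rfl⟩ := Finset.mem_image.mp hx
        have hPk : P.eval (chebNode n (k:ℕ)) = 0 := by
          rw [hP, eval_prod]
          exact Finset.prod_eq_zero (Finset.mem_univ k) (by simp)
        simp only [hg, hQ, eval_add, eval_mul, eval_C, hPk, hInterp k]
        ring
    set p := F.orderEmbOfFin hcard with hp
    have hpmem : ∀ i, p i ∈ F := fun i => F.orderEmbOfFin_mem hcard i
    have hd : ∀ i ≤ n, DifferentiableOn ℝ (iteratedDerivWithin i g (Set.Icc (-1:ℝ) 1))
        (Set.Icc (-1:ℝ) 1) := by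
      intro i hi
      refine DifferentiableOn.congr ((hf i (by omega)).sub
        ((Polynomial.differentiable (derivative^[i] Q)).differentiableOn)) ?_
      intro x hx
      exact iter_deriv_sub_poly n f hf Q i (by omega) x hx
    obtain ⟨ξ, hξmem, hξ0⟩ := iterated_rolle n g p p.strictMono
      (fun i => hFmem _ (hpmem i)) (fun i => hgF _ (hpmem i)) hd
    have hξs : ξ ∈ Set.Icc (-1:ℝ) 1 :=
      ⟨le_trans (hFmem _ (hpmem 0)).1 (le_of_lt hξmem.1),
        le_trans (le_of_lt hξmem.2) (hFmem _ (hpmem _)).2⟩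
    have hkey : iteratedDerivWithin (n+1) f (Set.Icc (-1:ℝ) 1) ξ
        = (derivative^[n+1] Q).eval ξ := by
      have h := iter_deriv_sub_poly n f hf Q (n+1) le_rfl ξ hξs
      rw [← hg] at h
      rw [hξ0] at h
      linarith [h]
    have hQdegle : Q.natDegree ≤ n + 1 := by
      rw [hQ]
      refine le_trans (natDegree_add_le _ _) (max_le ?_ ?_)
      · exact le_trans (natDegree_le_iff_degree_le.mpr hIdeg) (by omega)
      · exact le_trans natDegree_mul_le (by simp [hPdeg])
    have hQcoeff : Q.coeff (n+1) = c := by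
      rw [hQ, coeff_add, coeff_C_mul,
        coeff_eq_zero_of_natDegree_lt
          (lt_of_le_of_lt (natDegree_le_iff_degree_le.mpr hIdeg) (by omega)),
        ← hPdeg, hPm.coeff_natDegree]
      ring
    have hQder : derivative^[n+1] Q = C (c * (Nat.factorial (n+1) : ℝ)) := by
      have h1 : (derivative^[n+1] Q).natDegree = 0 :=
        le_antisymm (le_trans (natDegree_iterate_derivative Q (n+1)) (by omega)) (Nat.zero_le _)
      have h2 := Polynomial.eq_C_of_natDegree_le_zero (le_of_eq h1)
      rw [h2, coeff_iterate_derivative]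
      simp only [zero_add, Nat.descFactorial_self, hQcoeff]
      rw [nsmul_eq_mul]
      ring_nf
    have hcval : iteratedDerivWithin (n+1) f (Set.Icc (-1:ℝ) 1) ξ
        = c * (Nat.factorial (n+1) : ℝ) := by
      rw [hkey, hQder, eval_C]
    have hcbound : |c| ≤ M / (Nat.factorial (n+1) : ℝ) := by
      rw [le_div_iff₀ hfac]
      calc |c| * (Nat.factorial (n+1) : ℝ) = |c * (Nat.factorial (n+1) : ℝ)| := by
            rw [abs_mul, abs_of_pos hfac]
        _ ≤ M := by rw [← hcval]; exact hM ξ hξs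
    rw [hft, abs_mul]
    calc |c| * |P.eval t|
        ≤ (M / (Nat.factorial (n+1) : ℝ)) * (1 / 2 ^ n) :=
          mul_le_mul hcbound (cheb_prod_bound n t ht) (abs_nonneg _) (by positivity)
      _ = M / (2 ^ n * (Nat.factorial (n+1) : ℝ)) := by
          rw [div_mul_div_comm, mul_one, mul_comm ((Nat.factorial (n+1) : ℝ)) ((2:ℝ)^n)]
end

section
/- Let f(x) = 1/(1 + 25x²) be the Runge function on [-1,1], and for each n let I_n be the polynomial of degree at most n interpolating f at the Chebyshev nodes x_k = cos((2k+1)π/(2n+2)), k = 0,…,n. Then I_n converges uniformly to f on [-1,1], i.e. sup_{x ∈ [-1,1]} |f(x) − I_n(x)| → 0 as n → ∞. -/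
open Set Polynomial Filter Real

noncomputable def tR : ℝ := (1 + Real.sqrt 26) / 5
noncomputable def sC : ℂ := Complex.I * (tR : ℝ)

lemma tR_gt_one : 1 < tR := by
  have h : (4:ℝ) < Real.sqrt 26 := by
    have := Real.sq_sqrt (by norm_num : (26:ℝ) ≥ 0)
    nlinarith [Real.sqrt_nonneg (26:ℝ)]
  unfold tR; linarith

lemma tR_pos : 0 < tR := lt_trans one_pos tR_gt_one

lemma tR_key : tR ^ 2 - 1 = 2 / 5 * tR := by
  have h := Real.sq_sqrt (by norm_num : (26:ℝ) ≥ 0)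
  unfold tR; nlinarith

lemma sC_ne_zero : sC ≠ 0 := by
  unfold sC
  simp [Complex.ext_iff, tR_pos.ne']

lemma sC_key : sC + sC⁻¹ = 2 * (Complex.I / 5) := by
  have h := tR_key
  have ht : (tR : ℂ) ≠ 0 := by exact_mod_cast tR_pos.ne'
  have hI := Complex.I_ne_zero
  field_simp [sC, Complex.ext_iff]
  have hc := congrArg (fun r : ℝ => (r:ℂ)) h
  push_cast at hc
  rw [sC]
  linear_combination (-5) * hc + (5 * (tR:ℂ)^2 - 2 * (tR:ℂ)) * Complex.I_sq

lemma abs_sC : ‖sC‖ = tR := by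
  unfold sC
  rw [norm_mul, Complex.norm_I, Complex.norm_real, one_mul, Real.norm_eq_abs, abs_of_pos tR_pos]

/-- closed form for Chebyshev values at `i/5`. -/
lemma cheb_closed (m : ℕ) :
    (Polynomial.Chebyshev.T ℂ m).eval (Complex.I / 5) = (sC ^ m + sC⁻¹ ^ m) / 2 := by
  induction m using Nat.twoStepInduction with
  | zero => simp [Polynomial.Chebyshev.T_zero]
  | one =>
    simp only [Nat.cast_one, Polynomial.Chebyshev.T_one, eval_X, pow_one]
    rw [sC_key]; ring
  | more m ih1 ih2 =>
    have hrec := Polynomial.Chebyshev.T_add_two ℂ (m : ℤ)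
    have : ((m + 2 : ℕ) : ℤ) = (m : ℤ) + 2 := by push_cast; ring
    rw [this, hrec]
    have h1 : ((m + 1 : ℕ) : ℤ) = (m : ℤ) + 1 := by push_cast; ring
    rw [← h1]
    simp only [eval_sub, eval_mul, eval_ofNat, eval_X, ih1, ih2]
    have hinv : sC * sC⁻¹ = 1 := mul_inv_cancel₀ sC_ne_zero
    rw [← sC_key]
    linear_combination ((sC⁻¹ ^ m + sC ^ m) / 2) * hinv

lemma cheb_big (m : ℕ) :
    (tR ^ (m + 1) - 1) / 2 ≤ ‖(Polynomial.Chebyshev.T ℂ (m + 1)).eval (Complex.I / 5)‖ := by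
  have h1 : ((m + 1 : ℕ) : ℤ) = (m : ℤ) + 1 := by push_cast; ring
  rw [← h1, cheb_closed (m + 1)]
  have habs : ‖sC ^ (m+1)‖ = tR ^ (m+1) := by
    rw [norm_pow, abs_sC]
  have habsinv : ‖sC⁻¹ ^ (m+1)‖ ≤ 1 := by
    rw [norm_pow, norm_inv, abs_sC]
    apply pow_le_one₀ (inv_nonneg.mpr tR_pos.le)
    rw [inv_le_one_iff₀]; right; exact le_of_lt tR_gt_one
  have h2 : ‖sC ^ (m+1)‖ - ‖sC⁻¹ ^ (m+1)‖ ≤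
      ‖sC ^ (m+1) + sC⁻¹ ^ (m+1)‖ := by
    simpa [sub_neg_eq_add] using
      norm_sub_norm_le (sC ^ (m+1)) (-(sC⁻¹ ^ (m+1)))
  rw [norm_div]
  simp only [Complex.norm_ofNat]
  have h3 : tR ^ (m+1) - 1 ≤ ‖sC ^ (m+1) + sC⁻¹ ^ (m+1)‖ := by
    rw [habs] at h2; linarith
  linarith [h3]

lemma cheb_big_pos (m : ℕ) : 0 < (tR ^ (m + 1) - 1) / 2 := by
  have : 1 < tR ^ (m+1) := one_lt_pow₀ tR_gt_one (Nat.succ_ne_zero m)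
  linarith

lemma cheb_natDegree_le (m : ℕ) : (Polynomial.Chebyshev.T ℝ (m : ℤ)).natDegree ≤ m := by
  induction m using Nat.twoStepInduction with
  | zero => simp [Polynomial.Chebyshev.T_zero]
  | one => simp [Polynomial.Chebyshev.T_one]
  | more m ih1 ih2 =>
    have h2 : ((m + 2 : ℕ) : ℤ) = (m : ℤ) + 2 := by push_cast; ring
    have h1 : ((m + 1 : ℕ) : ℤ) = (m : ℤ) + 1 := by push_cast; ring
    rw [h2, Polynomial.Chebyshev.T_add_two]
    refine le_trans (Polynomial.natDegree_sub_le _ _) ?_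
    rw [max_le_iff]
    constructor
    · refine le_trans (Polynomial.natDegree_mul_le) ?_
      have : (2 * X : ℝ[X]).natDegree ≤ 1 := by compute_degree
      rw [← h1]
      omega
    · omega

set_option maxHeartbeats 2000000 in
lemma pointwise_bound (n : ℕ) (p : Polynomial ℝ) (hdeg : p.degree ≤ n)
    (hint : ∀ k : ℕ, k ≤ n →
      p.eval (Real.cos ((2 * k + 1) * Real.pi / (2 * n + 2))) =
        1 / (1 + 25 * (Real.cos ((2 * k + 1) * Real.pi / (2 * n + 2))) ^ 2))
    (x : ℝ) (hx : x ∈ Set.Icc (-1:ℝ) 1) :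
    |1 / (1 + 25 * x ^ 2) - p.eval x| ≤ 12 / (tR ^ (n + 1) - 1) := by
  have hπ := Real.pi_pos
  have hd : (0:ℝ) < 2 * (n:ℝ) + 2 := by positivity
  set θ : ℕ → ℝ := fun k => (2 * k + 1) * Real.pi / (2 * n + 2) with hθ
  set node : ℕ → ℝ := fun k => Real.cos (θ k) with hnode
  -- nodes are in [0, π] and distinct
  have hθmem : ∀ k : ℕ, k ≤ n → θ k ∈ Set.Icc 0 Real.pi := by
    intro k hk
    constructor
    · have : (0:ℝ) ≤ (2 * k + 1) * Real.pi := by positivity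
      exact div_nonneg this hd.le
    · rw [hθ]
      simp only
      rw [div_le_iff₀ hd]
      have hkn : (k:ℝ) ≤ n := Nat.cast_le.mpr hk
      nlinarith
  have hθlt : ∀ i j : ℕ, i < j → θ i < θ j := by
    intro i j hij
    rw [hθ]
    simp only
    rw [div_lt_div_iff₀ hd hd]
    have : (i:ℝ) < j := Nat.cast_lt.mpr hij
    nlinarith [mul_pos hπ hd]
  have hnode_ne : ∀ i ∈ Finset.range (n+1), ∀ j ∈ Finset.range (n+1), i ≠ j →
      node i ≠ node j := by
    intro i hi j hj hij
    rw [Finset.mem_range, Nat.lt_succ_iff] at hi hj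
    rcases hij.lt_or_gt with h | h
    · exact ne_of_gt (Real.strictAntiOn_cos (hθmem i hi) (hθmem j hj) (hθlt i j h))
    · exact ne_of_lt (Real.strictAntiOn_cos (hθmem j hj) (hθmem i hi) (hθlt j i h))
  set ω : Polynomial ℝ := ∏ k ∈ Finset.range (n+1), (X - C (node k)) with hω
  have hcop : (↑(Finset.range (n+1)) : Set ℕ).Pairwise
      (Function.onFun IsCoprime fun k => (X : Polynomial ℝ) - C (node k)) := by
    intro i hi j hj hij
    exact Polynomial.isCoprime_X_sub_C_of_isUnit_sub
      (isUnit_iff_ne_zero.mpr (sub_ne_zero.mpr (hnode_ne i hi j hj hij)))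
  have hωdvd : ∀ q : Polynomial ℝ, (∀ k : ℕ, k ≤ n → q.eval (node k) = 0) → ω ∣ q := by
    intro q hq
    refine Finset.prod_dvd_of_coprime hcop ?_
    intro k hk
    rw [Polynomial.dvd_iff_isRoot]
    exact hq k (Nat.lt_succ_iff.mp (Finset.mem_range.mp hk))
  have hωmonic : ω.Monic := monic_prod_of_monic _ _ fun k _ => monic_X_sub_C _
  have hωne : ω ≠ 0 := hωmonic.ne_zero
  have hωdeg : ω.natDegree = n + 1 := by
    rw [hω, Polynomial.natDegree_prod _ _ fun k _ => X_sub_C_ne_zero _]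
    simp [Polynomial.natDegree_X_sub_C]
  -- Chebyshev T (n+1) vanishes at nodes
  have hTroot : ∀ k : ℕ, k ≤ n →
      (Polynomial.Chebyshev.T ℝ ((n:ℤ) + 1)).eval (node k) = 0 := by
    intro k hk
    rw [hnode]
    simp only
    rw [Polynomial.Chebyshev.T_real_cos]
    have harg : (((n:ℤ) + 1 : ℤ) : ℝ) * θ k = (k:ℝ) * Real.pi + Real.pi / 2 := by
      rw [hθ]
      push_cast
      field_simp
    rw [harg, Real.cos_add_pi_div_two, Real.sin_nat_mul_pi]
    ring
  obtain ⟨cq, hcq⟩ : ω ∣ Polynomial.Chebyshev.T ℝ ((n:ℤ) + 1) := hωdvd _ hTroot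
  -- complex evaluation point
  set z : ℂ := Complex.I / 5 with hz
  set φ : ℝ →+* ℂ := algebraMap ℝ ℂ with hφ
  have hTz_big : (tR ^ (n + 1) - 1) / 2 ≤
      ‖(Polynomial.Chebyshev.T ℂ ((n:ℤ) + 1)).eval z‖ := cheb_big n
  have hTz_pos : 0 < ‖(Polynomial.Chebyshev.T ℂ ((n:ℤ) + 1)).eval z‖ :=
    lt_of_lt_of_le (cheb_big_pos n) hTz_big
  have hmapT : (Polynomial.Chebyshev.T ℝ ((n:ℤ) + 1)).map φ
      = Polynomial.Chebyshev.T ℂ ((n:ℤ) + 1) := Polynomial.Chebyshev.map_T φ _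
  -- T ≠ 0, cq is a nonzero constant
  have hTne : Polynomial.Chebyshev.T ℝ ((n:ℤ) + 1) ≠ 0 := by
    intro h
    rw [← hmapT, h] at hTz_pos
    simp at hTz_pos
  have hcqne : cq ≠ 0 := by
    intro h
    rw [h, mul_zero] at hcq
    exact hTne hcq
  have hTdegle : (Polynomial.Chebyshev.T ℝ ((n:ℤ) + 1)).natDegree ≤ n + 1 := by
    have := cheb_natDegree_le (n + 1)
    rwa [show ((n + 1 : ℕ) : ℤ) = (n:ℤ) + 1 by push_cast; ring] at this
  have hcqdeg : cq.natDegree = 0 := by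
    have h1 : (Polynomial.Chebyshev.T ℝ ((n:ℤ) + 1)).natDegree
        = ω.natDegree + cq.natDegree := by rw [hcq, Polynomial.natDegree_mul hωne hcqne]
    omega
  set γ : ℝ := cq.coeff 0 with hγ
  have hcqC : cq = C γ := Polynomial.eq_C_of_natDegree_eq_zero hcqdeg
  have hγne : γ ≠ 0 := fun h => hcqne (by rw [hcqC, h, map_zero])
  -- the error polynomial
  set E : Polynomial ℝ := 1 - (1 + 25 * X ^ 2) * p with hE
  have hEroot : ∀ k : ℕ, k ≤ n → E.eval (node k) = 0 := by
    intro k hk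
    have h1 : (0:ℝ) < 1 + 25 * (node k) ^ 2 := by positivity
    rw [hE]
    simp only [eval_sub, eval_one, eval_mul, eval_add, eval_pow, eval_X, eval_ofNat]
    rw [hint k hk]
    field_simp
    rw [mul_zero, sub_eq_zero]
    simp only [hnode, hθ]
    ring_nf
  obtain ⟨R, hR⟩ : ω ∣ E := hωdvd _ hEroot
  -- complex evaluation of E at z is 1
  have hz2 : (1:ℂ) + 25 * z ^ 2 = 0 := by
    rw [hz, div_pow, Complex.I_sq]
    norm_num
  have hEz : ((E.map φ).eval z) = 1 := by
    rw [hE]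
    simp only [Polynomial.map_sub, Polynomial.map_one, Polynomial.map_mul, Polynomial.map_add,
      Polynomial.map_ofNat, Polynomial.map_pow, Polynomial.map_X, eval_sub, eval_one, eval_mul,
      eval_add, eval_ofNat, eval_pow, eval_X]
    rw [hz2]
    ring
  have hEz' : ((ω.map φ).eval z) * ((R.map φ).eval z) = 1 := by
    rw [← eval_mul, ← Polynomial.map_mul, ← hR, hEz]
  set w : ℂ := (ω.map φ).eval z with hw
  have hwne : w ≠ 0 := left_ne_zero_of_mul_eq_one hEz'
  have hwabs : 0 < ‖w‖ := norm_pos_iff.mpr hwne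
  -- degree of R
  have hEne : E ≠ 0 := by
    intro h
    rw [h] at hEz
    simp at hEz
  have hRne : R ≠ 0 := by
    intro h
    rw [h, mul_zero] at hR
    exact hEne hR
  have hpnat : p.natDegree ≤ n := Polynomial.natDegree_le_iff_degree_le.mpr hdeg
  have hq2 : ((1:Polynomial ℝ) + 25 * X ^ 2).natDegree ≤ 2 := by compute_degree
  have hEdeg : E.natDegree ≤ n + 2 := by
    rw [hE]
    refine le_trans (Polynomial.natDegree_sub_le _ _) ?_
    rw [max_le_iff]
    refine ⟨by simp, ?_⟩
    refine le_trans Polynomial.natDegree_mul_le ?_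
    omega
  have hRdeg : R.natDegree ≤ 1 := by
    have h1 : E.natDegree = ω.natDegree + R.natDegree := by
      rw [hR, Polynomial.natDegree_mul hωne hRne]
    omega
  set a : ℝ := R.coeff 1 with ha
  set b : ℝ := R.coeff 0 with hb
  have hRform : R = C a * X + C b :=
    Polynomial.eq_X_add_C_of_degree_le_one (Polynomial.natDegree_le_iff_degree_le.mp hRdeg)
  -- coefficients of R are controlled by 1/|w|
  have hRz : (R.map φ).eval z = (a:ℂ) * z + (b:ℂ) := by
    rw [hRform]
    simp [hφ]
  have habs1 : ‖w‖ * ‖(a:ℂ) * z + (b:ℂ)‖ = 1 := by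
    rw [← norm_mul, ← hRz, hEz']
    simp
  have hre : ((a:ℂ) * z + (b:ℂ)).re = b := by
    rw [hz]
    simp
  have him : ((a:ℂ) * z + (b:ℂ)).im = a / 5 := by
    rw [hz]
    simp
    ring
  have habsz : ‖(a:ℂ) * z + (b:ℂ)‖ = 1 / ‖w‖ := by
    field_simp
    linarith [habs1]
  have hbb : |b| ≤ 1 / ‖w‖ := by
    have := Complex.abs_re_le_norm ((a:ℂ) * z + (b:ℂ))
    rwa [hre, habsz] at this
  have haa : |a| ≤ 5 / ‖w‖ := by
    have := Complex.abs_im_le_norm ((a:ℂ) * z + (b:ℂ))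
    rw [him, habsz, abs_div] at this
    have h5 : |(5:ℝ)| = 5 := by norm_num
    rw [h5] at this
    rw [div_le_div_iff₀ (by norm_num : (0:ℝ) < 5) hwabs] at this
    rw [le_div_iff₀ hwabs]
    linarith
  -- relate |w| to the Chebyshev value, and bound ω on [-1,1]
  have hTzw : ‖(Polynomial.Chebyshev.T ℂ ((n:ℤ) + 1)).eval z‖
      = ‖w‖ * |γ| := by
    rw [← hmapT, hcq, hcqC, Polynomial.map_mul, eval_mul]
    rw [norm_mul]
    congr 1
    simp [hφ, Complex.norm_real]
  have hγabs : 0 < |γ| := abs_pos.mpr hγne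
  have hωx : |ω.eval x| ≤ 1 / |γ| := by
    have hTx : (Polynomial.Chebyshev.T ℝ ((n:ℤ) + 1)).eval x = ω.eval x * γ := by
      rw [hcq, hcqC, eval_mul, eval_C]
    have hTx1 : |(Polynomial.Chebyshev.T ℝ ((n:ℤ) + 1)).eval x| ≤ 1 := by
      have hxc : Real.cos (Real.arccos x) = x := Real.cos_arccos hx.1 hx.2
      rw [← hxc, Polynomial.Chebyshev.T_real_cos]
      exact Real.abs_cos_le_one _
    rw [hTx, abs_mul] at hTx1
    rw [le_div_iff₀ hγabs]
    linarith
  -- final computation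
  have hx1 : |x| ≤ 1 := abs_le.mpr ⟨hx.1, hx.2⟩
  have hRx : |R.eval x| ≤ 6 / ‖w‖ := by
    rw [hRform]
    simp only [eval_add, eval_mul, eval_C, eval_X]
    calc |a * x + b| ≤ |a * x| + |b| := abs_add_le _ _
      _ ≤ |a| + |b| := by
          rw [abs_mul]
          nlinarith [abs_nonneg a, abs_nonneg b]
      _ ≤ 5 / ‖w‖ + 1 / ‖w‖ := add_le_add haa hbb
      _ = 6 / ‖w‖ := by ring
  have hEx : |E.eval x| ≤ 6 / ‖(Polynomial.Chebyshev.T ℂ ((n:ℤ) + 1)).eval z‖ := by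
    rw [hR, eval_mul, abs_mul, hTzw]
    calc |ω.eval x| * |R.eval x| ≤ (1 / |γ|) * (6 / ‖w‖) := by
          apply mul_le_mul hωx hRx (abs_nonneg _) (by positivity)
      _ = 6 / (‖w‖ * |γ|) := by field_simp
  have hfinal : |E.eval x| ≤ 12 / (tR ^ (n + 1) - 1) := by
    refine le_trans hEx ?_
    rw [div_le_div_iff₀ hTz_pos (by linarith [cheb_big_pos n])]
    calc 6 * (tR ^ (n + 1) - 1)
        = 12 * ((tR ^ (n + 1) - 1) / 2) := by ring
      _ ≤ 12 * ‖(Polynomial.Chebyshev.T ℂ ((n:ℤ) + 1)).eval z‖ := by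
          linarith [hTz_big]
  -- express the error via E
  have hpos : (0:ℝ) < 1 + 25 * x ^ 2 := by positivity
  have herr : 1 / (1 + 25 * x ^ 2) - p.eval x = E.eval x / (1 + 25 * x ^ 2) := by
    rw [hE]
    simp only [eval_sub, eval_one, eval_mul, eval_add, eval_pow, eval_X, eval_ofNat]
    field_simp
  rw [herr, abs_div, abs_of_pos hpos]
  have h1le : 1 ≤ 1 + 25 * x ^ 2 := by nlinarith
  calc |E.eval x| / (1 + 25 * x ^ 2) ≤ |E.eval x| / 1 := by
        apply div_le_div_of_nonneg_left (abs_nonneg _) one_pos h1le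
    _ = |E.eval x| := div_one _
    _ ≤ 12 / (tR ^ (n + 1) - 1) := hfinal

/-- The polynomial interpolants of the Runge function `f(x) = 1/(1 + 25x²)` at the
Chebyshev nodes `x_k = cos((2k+1)π/(2n+2))`, `k = 0,…,n`, converge uniformly to `f` on
`[-1,1]`: the sup-error tends to `0`. -/
theorem runge_chebyshev_convergence
    (f : ℝ → ℝ) (hf : ∀ x : ℝ, f x = 1 / (1 + 25 * x ^ 2))
    (I : ℕ → Polynomial ℝ)
    (hdeg : ∀ n : ℕ, (I n).degree ≤ n)
    (hinterp : ∀ n : ℕ, ∀ k : ℕ, k ≤ n →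
      (I n).eval (Real.cos ((2 * k + 1) * Real.pi / (2 * n + 2))) =
        f (Real.cos ((2 * k + 1) * Real.pi / (2 * n + 2)))) :
    Tendsto (fun n => sSup ((fun x => |f x - (I n).eval x|) '' Set.Icc (-1 : ℝ) 1))
      atTop (nhds 0) := by
  have h1 : Tendsto (fun n : ℕ => tR ^ (n + 1) - 1) atTop atTop := by
    apply Filter.tendsto_atTop_add_const_right
    exact (tendsto_pow_atTop_atTop_of_one_lt tR_gt_one).comp (tendsto_add_atTop_nat 1)
  have hB : Tendsto (fun n : ℕ => 12 / (tR ^ (n + 1) - 1)) atTop (nhds 0) :=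
    tendsto_const_nhds.div_atTop h1
  have hBpos : ∀ n : ℕ, 0 < 12 / (tR ^ (n + 1) - 1) := by
    intro n
    have h2 : 0 < tR ^ (n + 1) - 1 := by linarith [cheb_big_pos n]
    positivity
  refine squeeze_zero (fun n => ?_) (fun n => ?_) hB
  · apply Real.sSup_nonneg
    rintro y ⟨x, -, rfl⟩
    exact abs_nonneg _
  · apply Real.sSup_le
    · rintro y ⟨x, hx, rfl⟩
      have hint : ∀ k : ℕ, k ≤ n →
          (I n).eval (Real.cos ((2 * k + 1) * Real.pi / (2 * n + 2))) =
            1 / (1 + 25 * (Real.cos ((2 * k + 1) * Real.pi / (2 * n + 2))) ^ 2) := by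
        intro k hk
        rw [hinterp n k hk, hf]
      have h3 := pointwise_bound n (I n) (hdeg n) hint x hx
      show |f x - (I n).eval x| ≤ _
      rw [hf x]
      exact h3
    · exact (hBpos n).le
end
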